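/- arXiv:2110.07346 — 3 statements merged into one kernel-verified Lean document; each statement's English description precedes it below -/
import Mathlib

section
/- Let G be a game with weights in ℤ ∪ {∞}, let σ₀ be an En-optimal strategy for Min in G (i.e., for every vertex u, sup over infinite paths π from u consistent with σ₀ of En(w(π)) equals En_G(u)), and let π = v₀ → v₁ → ⋯ → v_k be a finite path consistent with σ₀ such that En_G(v_k) < ∞. Then sum(π) ≤ En_G(v₀) − En_G(v_k), where sum(π) = ∑_{i<k} w(v_i, v_{i+1}). -/
attribute [local instance] Classical.propDecidable

/-- A game: a directed graph `E` on vertex set `V` with no sink, edge weights `wt : V → V → R`,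
and a partition of the vertices into those belonging to Min (`isMin`) and to Max (the rest). -/
structure Game (V : Type) (R : Type) where
  E : V → V → Prop
  wt : V → V → R
  isMin : V → Prop
  nosink : ∀ v, ∃ u, E v u

namespace Game

variable {V : Type} {R : Type}

/-- A strategy for Min: a choice of an outgoing edge at every Min vertex. -/
def MinStrat (G : Game V R) : Type := {σ : V → V // ∀ v, G.isMin v → G.E v (σ v)}

/-- A strategy for Max: a choice of an outgoing edge at every Max vertex. -/
def MaxStrat (G : Game V R) : Type := {τ : V → V // ∀ v, ¬ G.isMin v → G.E v (τ v)}

/-- An infinite path in the graph. -/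
def IsPath (G : Game V R) (π : ℕ → V) : Prop := ∀ i, G.E (π i) (π (i + 1))

/-- Consistency of an infinite path with a Min strategy. -/
def ConsMin (G : Game V R) (σ : G.MinStrat) (π : ℕ → V) : Prop :=
  ∀ i, G.isMin (π i) → π (i + 1) = σ.1 (π i)

/-- Consistency of an infinite path with a Max strategy. -/
def ConsMax (G : Game V R) (τ : G.MaxStrat) (π : ℕ → V) : Prop :=
  ∀ i, ¬ G.isMin (π i) → π (i + 1) = τ.1 (π i)

/-- Infinite paths starting in `v` consistent with the Min strategy `σ`. -/
def PlaysMin (G : Game V R) (σ : G.MinStrat) (v : V) : Type :=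
  {π : ℕ → V // π 0 = v ∧ G.IsPath π ∧ G.ConsMin σ π}

/-- Infinite paths starting in `v` consistent with the Max strategy `τ`. -/
def PlaysMax (G : Game V R) (τ : G.MaxStrat) (v : V) : Type :=
  {π : ℕ → V // π 0 = v ∧ G.IsPath π ∧ G.ConsMax τ π}

/-- The sequence of weights along an infinite path. -/
def wseq (G : Game V R) (π : ℕ → V) : ℕ → R := fun i => G.wt (π i) (π (i + 1))

/-- Embedding of `ℤ ∪ {∞}` into the extended reals. -/
noncomputable def toE (x : WithTop ℤ) : EReal :=
  if h : x = ⊤ then ⊤ else (((x.untop h : ℤ) : ℝ) : EReal)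

/-- Embedding of `ℕ ∪ {∞}` into the extended reals. -/
noncomputable def enatToE (x : ENat) : EReal :=
  if x = ⊤ then ⊤ else ((x.toNat : ℝ) : EReal)

/-- Conversion `ℤ ∪ {∞} → ℕ ∪ {∞}` (exact on non-negative values). -/
noncomputable def wToN (x : WithTop ℤ) : ENat :=
  if h : x = ⊤ then ⊤ else ((x.untop h).toNat : ENat)

/-- The mean-payoff valuation `MP(w₀w₁⋯) = limsup_k (1/k) ∑_{i<k} w_i`. -/
noncomputable def MPv (w : ℕ → ℤ) : EReal :=
  Filter.limsup
    (fun k : ℕ => ((((∑ i ∈ Finset.range k, w i : ℤ) : ℝ) / (k : ℝ) : ℝ) : EReal))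
    Filter.atTop

/-- The energy valuation `En(w₀w₁⋯) = sup_k ∑_{i<k} w_i` (weights given in `EReal`). -/
noncomputable def En (w : ℕ → EReal) : EReal :=
  ⨆ k : ℕ, ∑ i ∈ Finset.range k, w i

/-- The positive-energy valuation `En⁺(w₀w₁⋯) = ∑_{i<k¬} w_i ∈ ℕ ∪ {∞}` where `k¬` is the
first index of a negative weight (the whole, possibly infinite, sum if no weight is negative). -/
noncomputable def EnP (w : ℕ → WithTop ℤ) : ENat :=
  if h : ∃ k, w k < 0 then ∑ i ∈ Finset.range (Nat.find h), wToN (w i)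
  else ⨆ k : ℕ, ∑ i ∈ Finset.range k, wToN (w i)

/-- The mean-payoff value of a vertex:
`MP_G(v) = inf over Min strategies σ of sup over plays π from v consistent with σ of MP(w(π))`. -/
noncomputable def MPVal (G : Game V ℤ) (v : V) : EReal :=
  ⨅ σ : G.MinStrat, ⨆ π : G.PlaysMin σ v, MPv (G.wseq π.1)

/-- The energy value of a vertex. -/
noncomputable def EnVal (G : Game V (WithTop ℤ)) (v : V) : EReal :=
  ⨅ σ : G.MinStrat, ⨆ π : G.PlaysMin σ v, En (fun i => toE (G.wseq π.1 i))

/-- The positive-energy value of a vertex. -/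
noncomputable def EnPVal (G : Game V (WithTop ℤ)) (v : V) : ENat :=
  ⨅ σ : G.MinStrat, ⨆ π : G.PlaysMin σ v, EnP (G.wseq π.1)

/-- Lift a game with integer weights to a game with weights in `ℤ ∪ {∞}`. -/
def liftZ (G : Game V ℤ) : Game V (WithTop ℤ) :=
  { E := G.E, wt := fun u v => (G.wt u v : WithTop ℤ), isMin := G.isMin, nosink := G.nosink }

/-- The `φ`-modified weight: `w_φ(v,v') = w(v,v') + φ(v') − φ(v)` when `w(v,v')`, `φ(v)`, `φ(v')`
are all finite, and `∞` otherwise. -/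
noncomputable def modWt (w : V → V → WithTop ℤ) (φ : V → ENat) (u v : V) : WithTop ℤ :=
  if w u v = ⊤ ∨ φ u = ⊤ ∨ φ v = ⊤ then ⊤
  else (((w u v).untopD 0 + ((φ v).toNat : ℤ) - ((φ u).toNat : ℤ) : ℤ) : WithTop ℤ)

/-- The `φ`-modified game `G_φ`. -/
noncomputable def modify (G : Game V (WithTop ℤ)) (φ : V → ENat) : Game V (WithTop ℤ) :=
  { G with wt := modWt G.wt φ }

/-- `π 0 → π 1 → ⋯ → π k` is a simple cycle: `k ≥ 1`, consecutive edges, `π k = π 0`,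
and `π 0, …, π (k-1)` pairwise distinct. -/
def IsSimpleCycle (G : Game V R) (π : ℕ → V) (k : ℕ) : Prop :=
  1 ≤ k ∧ (∀ i < k, G.E (π i) (π (i + 1))) ∧ π k = π 0 ∧
    ∀ i < k, ∀ j < k, π i = π j → i = j

/-- A game is simple if every simple cycle has nonzero sum of weights. -/
def IsSimpleR [AddCommMonoid R] (G : Game V R) : Prop :=
  ∀ π k, IsSimpleCycle G π k → (∑ i ∈ Finset.range k, G.wt (π i) (π (i + 1))) ≠ 0

/-- `W = max_{e ∈ E} |w(e)|`. -/
noncomputable def maxW (G : Game V ℤ) [Fintype V] : ℕ :=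
  Finset.sup Finset.univ (fun p : V × V => if G.E p.1 p.2 then (G.wt p.1 p.2).natAbs else 0)

/-- The ESL iteration: `G₀ = G` and `G_{j+1} = (G_j)_{φ_j}` where `φ_j = En⁺_{G_j}`. -/
noncomputable def esl (G : Game V (WithTop ℤ)) : ℕ → Game V (WithTop ℤ)
  | 0 => G
  | j + 1 => modify (esl G j) (EnPVal (esl G j))

/-- The accumulated ESL potential `Φ_j = φ₀ + ⋯ + φ_{j−1}`. -/
noncomputable def eslPhi (G : Game V (WithTop ℤ)) (j : ℕ) (v : V) : ENat :=
  ∑ i ∈ Finset.range j, EnPVal (esl G i) v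

/-- The set of vertices from which Min can ensure to immediately visit a negative-weight edge:
Min vertices with some negative outgoing edge, and Max vertices all of whose outgoing edges
are negative. -/
def NegSet (G : Game V (WithTop ℤ)) : Set V :=
  {v | (G.isMin v ∧ ∃ u, G.E v u ∧ G.wt v u < 0) ∨
       (¬ G.isMin v ∧ ∀ u, G.E v u → G.wt v u < 0)}

end Game

open Game

/-- If `c + f i ≤ T` for all `i` (nonempty index), then `c + ⨆ i, f i ≤ T`. -/
lemma aux_add_iSup_le {ι : Type*} [Nonempty ι] (c : EReal) (f : ι → EReal) (T : EReal)
    (h : ∀ i, c + f i ≤ T) : c + ⨆ i, f i ≤ T := by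
  rcases eq_or_ne c ⊥ with rfl | hcb
  · simp
  rcases eq_or_ne c ⊤ with rfl | hct
  · by_cases hfb : ∀ i, f i = ⊥
    · have : (⨆ i, f i) = ⊥ := by simp [hfb]
      simp [this]
    · push_neg at hfb
      obtain ⟨i, hi⟩ := hfb
      have : (⊤ : EReal) + f i = ⊤ := by
        rcases eq_or_ne (f i) ⊤ with h' | h'
        · simp [h']
        · exact EReal.top_add_of_ne_bot hi
      calc (⊤ : EReal) + ⨆ j, f j ≤ ⊤ := le_top
        _ = ⊤ + f i := this.symm
        _ ≤ T := h i
  · rw [add_comm, ← EReal.le_sub_iff_add_le (Or.inl hcb) (Or.inl hct)]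
    exact iSup_le fun i => (EReal.le_sub_iff_add_le (Or.inl hcb) (Or.inl hct)).2
      (by rw [add_comm]; exact h i)

/-- From any vertex there is a play consistent with a given Min strategy. -/
lemma aux_plays_nonempty {V R : Type} (G : Game V R) (σ : G.MinStrat) (v : V) :
    Nonempty (G.PlaysMin σ v) := by
  have hch := fun u => Classical.choice (α := {w // G.E u w})
    (let ⟨w, hw⟩ := G.nosink u; ⟨⟨w, hw⟩⟩)
  let f : V → V := fun u => if G.isMin u then σ.1 u else (hch u).1
  refine ⟨⟨fun n => f^[n] v, rfl, ?_, ?_⟩⟩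
  · intro i
    show G.E (f^[i] v) (f^[i+1] v)
    rw [Function.iterate_succ_apply']
    by_cases h : G.isMin (f^[i] v)
    · simpa [f, h] using σ.2 _ h
    · simpa [f, h] using (hch (f^[i] v)).2
  · intro i h
    show f^[i+1] v = σ.1 (f^[i] v)
    rw [Function.iterate_succ_apply']
    simp only [f]
    rw [if_pos h]

/-- The energy value is nonnegative. -/
lemma aux_enval_nonneg {V : Type} (G : Game V (WithTop ℤ)) (v : V) :
    (0 : EReal) ≤ EnVal G v := by
  refine le_iInf fun σ => ?_
  obtain ⟨ρ⟩ := aux_plays_nonempty G σ v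
  refine le_iSup_of_le ρ (le_iSup_of_le 0 ?_)
  simp

/-- Along a finite path consistent with an `En`-optimal Min strategy and ending in a vertex of
finite energy, the sum of weights is at most `En_G(v₀) − En_G(v_k)`. -/
theorem optimal_strategy_sum_bound {V : Type} [Fintype V] (G : Game V (WithTop ℤ))
    (σ₀ : G.MinStrat)
    (hopt : ∀ u : V,
      (⨆ π : G.PlaysMin σ₀ u, En (fun i => toE (G.wseq π.1 i))) = EnVal G u)
    (π : ℕ → V) (k : ℕ)
    (hpath : ∀ i < k, G.E (π i) (π (i + 1)))
    (hcons : ∀ i < k, G.isMin (π i) → π (i + 1) = σ₀.1 (π i))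
    (hfin : EnVal G (π k) < ⊤) :
    (∑ i ∈ Finset.range k, toE (G.wt (π i) (π (i + 1))))
      ≤ EnVal G (π 0) - EnVal G (π k) := by
  have hstep : ∀ i < k,
      toE (G.wt (π i) (π (i + 1))) + EnVal G (π (i + 1)) ≤ EnVal G (π i) := by
    intro i hik
    rw [← hopt (π (i + 1)), ← hopt (π i)]
    have : Nonempty (G.PlaysMin σ₀ (π (i + 1))) := aux_plays_nonempty G σ₀ (π (i + 1))
    refine aux_add_iSup_le _ _ _ fun ρ => ?_
    -- the prepended play
    set ρ' : ℕ → V := fun n => Nat.rec (π i) (fun m _ => ρ.1 m) n with hρ'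
    have hρ'0 : ρ' 0 = π i := rfl
    have hρ'succ : ∀ n, ρ' (n + 1) = ρ.1 n := fun n => rfl
    have hρplay : ρ' 0 = π i ∧ G.IsPath ρ' ∧ G.ConsMin σ₀ ρ' := by
      refine ⟨rfl, ?_, ?_⟩
      · intro j
        cases j with
        | zero =>
          rw [hρ'0, hρ'succ]
          rw [ρ.2.1]
          exact hpath i hik
        | succ m =>
          rw [hρ'succ, hρ'succ]
          exact ρ.2.2.1 m
      · intro j hmin
        cases j with
        | zero =>
          rw [hρ'0] at hmin
          rw [hρ'succ, ρ.2.1, hρ'0]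
          exact hcons i hik hmin
        | succ m =>
          rw [hρ'succ] at hmin ⊢
          rw [hρ'succ]
          exact ρ.2.2.2 m hmin
    refine le_iSup_of_le ⟨ρ', hρplay⟩ ?_
    -- now compare the energies
    refine aux_add_iSup_le _ _ _ fun m => ?_
    refine le_iSup_of_le (m + 1) (le_of_eq ?_)
    rw [Finset.sum_range_succ']
    have h0 : toE (G.wseq ρ' 0) = toE (G.wt (π i) (π (i + 1))) := by
      simp only [Game.wseq, hρ'0, hρ'succ, ρ.2.1]
    have hs : ∀ j, toE (G.wseq ρ' (j + 1)) = toE (G.wseq ρ.1 j) := by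
      intro j; simp only [Game.wseq, hρ'succ]
    rw [h0, add_comm]
    congr 1
  have hmain : ∀ m ≤ k,
      (∑ i ∈ Finset.range m, toE (G.wt (π i) (π (i + 1)))) + EnVal G (π m)
        ≤ EnVal G (π 0) := by
    intro m
    induction m with
    | zero => intro _; simp
    | succ n ih =>
      intro hnk
      have hn : n < k := hnk
      calc (∑ i ∈ Finset.range (n + 1), toE (G.wt (π i) (π (i + 1)))) + EnVal G (π (n + 1))
          = (∑ i ∈ Finset.range n, toE (G.wt (π i) (π (i + 1))))
            + (toE (G.wt (π n) (π (n + 1))) + EnVal G (π (n + 1))) := by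
            rw [Finset.sum_range_succ, add_assoc]
        _ ≤ (∑ i ∈ Finset.range n, toE (G.wt (π i) (π (i + 1)))) + EnVal G (π n) :=
            add_le_add le_rfl (hstep n hn)
        _ ≤ EnVal G (π 0) := ih hn.le
  have hb : EnVal G (π k) ≠ ⊥ := fun h => by
    simpa [h] using aux_enval_nonneg G (π k)
  exact (EReal.le_sub_iff_add_le (Or.inl hb) (Or.inl hfin.ne)).2 (hmain k le_rfl)
end

section
/- Let G be a simple game with weights in ℤ ∪ {∞} and let v be a vertex such that Max has a strategy τ with the property that every infinite path from v consistent with τ has all its weights non-negative. Then En⁺_G(v) = ∞. -/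
attribute [local instance] Classical.propDecidable

open Game

/-- In a simple game, if Max can ensure from `v` that all weights seen are non-negative, then
`En⁺_G(v) = ∞`. -/
theorem enp_infinite_of_nonneg_strategy {V : Type} [Fintype V] (G : Game V (WithTop ℤ))
    (hs : IsSimpleR G) (v : V) (τ : G.MaxStrat)
    (hτ : ∀ π : G.PlaysMax τ v, ∀ i : ℕ, 0 ≤ G.wseq π.1 i) :
    EnPVal G v = ⊤ := by
  classical
  rw [EnPVal, iInf_eq_top]
  intro σ
  -- the play following both strategies
  set f : V → V := fun u => if G.isMin u then σ.1 u else τ.1 u with hf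
  set π : ℕ → V := fun n => f^[n] v with hπdef
  have hπ0 : π 0 = v := rfl
  have hπs : ∀ n, π (n + 1) = f (π n) := fun n => Function.iterate_succ_apply' f n v
  have hpath : G.IsPath π := by
    intro n
    rw [hπs]
    by_cases h : G.isMin (π n)
    · simpa [hf, h] using σ.2 (π n) h
    · simpa [hf, h] using τ.2 (π n) h
  have hcmin : G.ConsMin σ π := by intro n h; rw [hπs]; simp [hf, h]
  have hcmax : G.ConsMax τ π := by intro n h; rw [hπs]; simp [hf, h]
  have h0 : ∀ n, 0 ≤ G.wseq π n := hτ ⟨π, hπ0, hpath, hcmax⟩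
  set w : ℕ → WithTop ℤ := G.wseq π with hw
  -- auxiliary sum-splitting lemma
  have sum_split : ∀ (g : ℕ → ENat) (a b : ℕ),
      ∑ n ∈ Finset.range (a + b), g n
        = (∑ n ∈ Finset.range a, g n) + ∑ m ∈ Finset.range b, g (a + m) := by
    intro g a b
    induction b with
    | zero => simp
    | succ b ih =>
        rw [Nat.add_succ, Finset.sum_range_succ, ih, Finset.sum_range_succ, add_assoc]
  -- pigeonhole: find first repetition
  have hP : ∃ j, ∃ i, i < j ∧ π i = π j := by
    obtain ⟨x, y, hxy, hpxy⟩ := Finite.exists_ne_map_eq_of_infinite π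
    rcases hxy.lt_or_gt with h | h
    · exact ⟨y, x, h, hpxy⟩
    · exact ⟨x, y, h, hpxy.symm⟩
  set j : ℕ := Nat.find hP with hj
  obtain ⟨i, hij, hpij⟩ := Nat.find_spec hP
  have hinj : ∀ a < j, ∀ b < j, π a = π b → a = b := by
    intro a ha b hb hab
    by_contra hne
    rcases Ne.lt_or_gt hne with h | h
    · exact Nat.find_min hP hb ⟨a, h, hab⟩
    · exact Nat.find_min hP ha ⟨b, h, hab.symm⟩
  set k : ℕ := j - i with hkdef
  have hk : 1 ≤ k := by omega
  have hik : i + k = j := by omega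
  -- simple cycle
  have hcyc : IsSimpleCycle G (fun n => π (i + n)) k := by
    refine ⟨hk, ?_, ?_, ?_⟩
    · intro m _; exact hpath (i + m)
    · show π (i + k) = π (i + 0)
      rw [hik]; exact hpij.symm
    · intro a ha b hb hab
      have := hinj (i + a) (by omega) (i + b) (by omega) hab
      omega
  have hsum : (∑ m ∈ Finset.range k, G.wt (π (i + m)) (π (i + (m + 1)))) ≠ 0 :=
    hs (fun n => π (i + n)) k hcyc
  -- some weight on the cycle is nonzero
  have hterm : ∃ m, m < k ∧ w (i + m) ≠ 0 := by
    by_contra hc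
    push_neg at hc
    exact hsum (Finset.sum_eq_zero fun m hm => hc m (Finset.mem_range.mp hm))
  obtain ⟨m, hmk, hm0⟩ := hterm
  have hone : ∀ x : WithTop ℤ, 0 ≤ x → x ≠ 0 → 1 ≤ wToN x := by
    intro x hx hx0
    rw [wToN]
    split_ifs with h
    · exact le_top
    · set a := x.untop h with ha
      have hxa : x = (a : WithTop ℤ) := (WithTop.coe_untop x h).symm
      rw [hxa] at hx hx0
      have h1 : (0 : ℤ) ≤ a := by exact_mod_cast hx
      have h2 : a ≠ 0 := by exact_mod_cast hx0
      have h3 : 1 ≤ a.toNat := by omega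
      exact_mod_cast h3
  -- periodicity
  have hper : ∀ n, π (i + n + k) = π (i + n) := by
    intro n
    induction n with
    | zero =>
        show π (i + 0 + k) = π (i + 0)
        simp only [Nat.add_zero]
        rw [hik]; exact hpij.symm
    | succ n ih =>
        calc π (i + (n + 1) + k) = f (π (i + n + k)) := by
              rw [show i + (n + 1) + k = (i + n + k) + 1 from by omega, hπs]
          _ = f (π (i + n)) := by rw [ih]
          _ = π (i + (n + 1)) := (hπs (i + n)).symm
  have hperw : ∀ n, w (i + n + k) = w (i + n) := by
    intro n
    show G.wt (π (i + n + k)) (π (i + n + k + 1)) = G.wt (π (i + n)) (π (i + n + 1))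
    rw [show i + n + k + 1 = i + (n + 1) + k from by omega, hper n, hper (n + 1)]
    rfl
  have hperw' : ∀ s n, w (i + n + k * s) = w (i + n) := by
    intro s
    induction s with
    | zero => simp
    | succ s ih =>
        intro n
        rw [show i + n + k * (s + 1) = i + (n + k * s) + k from by ring, hperw (n + k * s),
          show i + (n + k * s) = i + n + k * s from by ring]
        exact ih n
  -- each block contributes at least 1
  have hblock : ∀ s, (1 : ENat) ≤ ∑ n ∈ Finset.range k, wToN (w (i + k * s + n)) := by
    intro s
    have h1 : (1 : ENat) ≤ wToN (w (i + k * s + m)) := by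
      rw [show i + k * s + m = i + m + k * s from by ring, hperw' s m]
      exact hone _ (h0 _) hm0
    exact h1.trans
      (Finset.single_le_sum (f := fun n => wToN (w (i + k * s + n)))
        (fun n _ => zero_le) (Finset.mem_range.mpr hmk))
  have hpart : ∀ t : ℕ, (t : ENat) ≤ ∑ n ∈ Finset.range (i + k * t), wToN (w n) := by
    intro t
    induction t with
    | zero => simp
    | succ t ih =>
        rw [show i + k * (t + 1) = (i + k * t) + k from by ring, sum_split]
        calc ((t + 1 : ℕ) : ENat) = (t : ENat) + 1 := by push_cast; ring
          _ ≤ (∑ n ∈ Finset.range (i + k * t), wToN (w n))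
              + ∑ n ∈ Finset.range k, wToN (w (i + k * t + n)) :=
            add_le_add ih (hblock t)
  -- conclude EnP of this play is ⊤
  have hEnP : EnP w = ⊤ := by
    have hnoneg : ¬ ∃ n, w n < 0 := by
      push_neg
      intro n
      exact h0 n
    rw [EnP, dif_neg hnoneg]
    by_contra h
    set x : ENat := ⨆ kk : ℕ, ∑ n ∈ Finset.range kk, wToN (w n) with hx
    have hle : ∀ t : ℕ, (t : ENat) ≤ x :=
      fun t => (hpart t).trans (le_iSup (fun kk => ∑ n ∈ Finset.range kk, wToN (w n)) (i + k * t))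
    lift x to ℕ using h with x0
    have := hle (x0 + 1)
    have : x0 + 1 ≤ x0 := by exact_mod_cast this
    omega
  rw [eq_top_iff]
  calc (⊤ : ENat) = EnP (G.wseq π) := hEnP.symm
    _ ≤ ⨆ p : G.PlaysMin σ v, EnP (G.wseq p.1) :=
        le_iSup (fun p : G.PlaysMin σ v => EnP (G.wseq p.1)) ⟨π, hπ0, hpath, hcmin⟩
end

section
/- Full correctness of the ESL algorithm: let G be a game with integer weights and let G₀ = G, φ_j = En⁺_{G_j}, G_{j+1} = (G_j)_{φ_j}, Φ_j = φ₀ + ⋯ + φ_{j−1}. Suppose Φ_{j+1} = Φ_j. Then for every vertex v ∈ V: En_G(v) < ∞ if and only if En_{G_j}(v) = 0, and in that case En_G(v) = Φ_j(v). -/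
attribute [local instance] Classical.propDecidable

open Game

section ESLProof

open Finset

namespace Game

variable {V : Type}

/-! ### Basic facts about `toE`, `enatToE`, `wToN` -/

lemma toE_ne_bot (x : WithTop ℤ) : toE x ≠ ⊥ := by
  unfold toE; split
  · simp
  · exact EReal.coe_ne_bot _

lemma toE_top : toE ⊤ = ⊤ := by unfold toE; simp

lemma toE_coe (n : ℤ) : toE (n : WithTop ℤ) = ((n:ℝ) : EReal) := by
  unfold toE
  rw [dif_neg (WithTop.coe_ne_top)]
  rw [WithTop.untop_coe]

lemma toE_nonneg {x : WithTop ℤ} (hx : 0 ≤ x) : 0 ≤ toE x := by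
  rcases eq_or_ne x ⊤ with h | h
  · rw [h, toE_top]; exact le_top
  · obtain ⟨n, rfl⟩ := WithTop.ne_top_iff_exists.1 h
    rw [← WithTop.coe_zero, WithTop.coe_le_coe] at hx
    rw [toE_coe]
    exact_mod_cast hx

lemma toE_nonpos {x : WithTop ℤ} (hx : x ≤ 0) : toE x ≤ 0 := by
  have hne : x ≠ ⊤ := by
    intro h; rw [h] at hx; exact absurd (hx.trans_lt (by exact_mod_cast WithTop.coe_lt_top 0)) (lt_irrefl _)
  obtain ⟨n, rfl⟩ := WithTop.ne_top_iff_exists.1 hne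
  rw [← WithTop.coe_zero, WithTop.coe_le_coe] at hx
  rw [toE_coe]
  exact_mod_cast hx

lemma toE_ne_top {x : WithTop ℤ} (hx : x ≠ ⊤) : toE x ≠ ⊤ := by
  obtain ⟨n, rfl⟩ := WithTop.ne_top_iff_exists.1 hx
  rw [toE_coe]; exact EReal.coe_ne_top _

lemma enatToE_top : enatToE ⊤ = ⊤ := by unfold enatToE; simp

lemma enatToE_of_ne_top {x : ENat} (hx : x ≠ ⊤) :
    enatToE x = ((x.toNat : ℝ) : EReal) := by
  unfold enatToE; rw [if_neg hx]

lemma enatToE_natCast (n : ℕ) : enatToE (n : ENat) = ((n:ℝ) : EReal) := by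
  rw [enatToE_of_ne_top (by simp)]
  simp

lemma enatToE_zero : enatToE 0 = 0 := by
  simpa using enatToE_natCast 0

lemma enatToE_nonneg (x : ENat) : 0 ≤ enatToE x := by
  rcases eq_or_ne x ⊤ with h | h
  · rw [h, enatToE_top]; exact le_top
  · rw [enatToE_of_ne_top h]; exact_mod_cast Nat.cast_nonneg _

lemma enatToE_ne_bot (x : ENat) : enatToE x ≠ ⊥ := by
  intro h
  exact absurd (h ▸ enatToE_nonneg x) (by simp)

lemma enatToE_mono {a b : ENat} (h : a ≤ b) : enatToE a ≤ enatToE b := by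
  rcases eq_or_ne b ⊤ with hb | hb
  · rw [hb, enatToE_top]; exact le_top
  · have ha : a ≠ ⊤ := fun h' => hb (top_le_iff.1 (h' ▸ h))
    rw [enatToE_of_ne_top ha, enatToE_of_ne_top hb]
    have := ENat.toNat_le_toNat h (by simpa [lt_top_iff_ne_top] using hb)
    exact_mod_cast this

lemma enatToE_eq_top_iff {x : ENat} : enatToE x = ⊤ ↔ x = ⊤ := by
  constructor
  · intro h; by_contra hx
    rw [enatToE_of_ne_top hx] at h
    exact EReal.coe_ne_top _ h
  · intro h; rw [h, enatToE_top]

lemma enatToE_add {a b : ENat} (ha : a ≠ ⊤) (hb : b ≠ ⊤) :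
    enatToE (a + b) = enatToE a + enatToE b := by
  rw [enatToE_of_ne_top ha, enatToE_of_ne_top hb,
    enatToE_of_ne_top (x := a + b) (WithTop.add_ne_top.2 ⟨ha, hb⟩)]
  rw [ENat.toNat_add ha hb]
  push_cast
  rfl

lemma wToN_top : wToN ⊤ = ⊤ := by unfold wToN; simp

lemma wToN_coe (n : ℤ) : wToN (n : WithTop ℤ) = (n.toNat : ENat) := by
  unfold wToN
  rw [dif_neg (WithTop.coe_ne_top)]
  rw [WithTop.untop_coe]

lemma wToN_eq_zero_iff {x : WithTop ℤ} (hx : 0 ≤ x) : wToN x = 0 ↔ x = 0 := by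
  rcases eq_or_ne x ⊤ with h | h
  · rw [h, wToN_top]; simp
  · obtain ⟨n, rfl⟩ := WithTop.ne_top_iff_exists.1 h
    rw [← WithTop.coe_zero, WithTop.coe_le_coe] at hx
    rw [wToN_coe]
    constructor
    · intro hz
      have : n.toNat = 0 := by exact_mod_cast hz
      have : n = 0 := le_antisymm (by omega) hx
      exact_mod_cast congrArg (fun m => ((m : ℤ) : WithTop ℤ)) this
    · intro hz
      have : n = 0 := by exact_mod_cast hz
      simp [this]

/-! ### EReal helpers -/

lemma nat_le_top_eereal {a : EReal} (h : ∀ n : ℕ, (n : EReal) ≤ a) : a = ⊤ := by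
  induction a using EReal.rec with
  | bot =>
      have h1 := h 1
      rw [show ((1:ℕ):EReal) = ((1:ℝ):EReal) by norm_cast, le_bot_iff] at h1
      exact absurd h1 (EReal.coe_ne_bot 1)
  | coe x =>
      obtain ⟨n, hn⟩ := exists_nat_gt x
      have h2 := h n
      rw [show ((n:ℕ):EReal) = (((n:ℝ)):EReal) by norm_cast, EReal.coe_le_coe_iff] at h2
      linarith
  | top => rfl

lemma ereal_add_coe_neg (a : EReal) (c : ℝ) : (a + (c:EReal)) + ((-c:ℝ):EReal) = a := by
  induction a using EReal.rec with
  | bot => rw [EReal.bot_add, EReal.bot_add]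
  | coe x => norm_cast; ring
  | top => rw [EReal.top_add_coe, EReal.top_add_coe]

/-- Adding a real constant is an order isomorphism of `EReal`. -/
noncomputable def addRealIso (c : ℝ) : EReal ≃o EReal where
  toFun x := x + (c : EReal)
  invFun x := x + ((-c : ℝ) : EReal)
  left_inv x := ereal_add_coe_neg x c
  right_inv x := by
    have := ereal_add_coe_neg x (-c)
    rwa [neg_neg] at this
  map_rel_iff' := by
    intro a b
    simp only [Equiv.coe_fn_mk]
    constructor
    · intro h
      have h2 := add_le_add_left h ((-c : ℝ) : EReal)
      rwa [ereal_add_coe_neg, ereal_add_coe_neg] at h2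
    · intro h
      exact add_le_add_left h _

lemma ereal_iSup_add_coe {ι : Sort*} (f : ι → EReal) (c : ℝ) :
    (⨆ i, f i) + (c : EReal) = ⨆ i, (f i + (c : EReal)) :=
  (addRealIso c).map_iSup f

lemma ereal_iInf_add_coe {ι : Sort*} (f : ι → EReal) (c : ℝ) :
    (⨅ i, f i) + (c : EReal) = ⨅ i, (f i + (c : EReal)) :=
  (addRealIso c).map_iInf f

lemma ereal_sum_ne_bot {s : Finset ℕ} {f : ℕ → EReal} (h : ∀ i ∈ s, f i ≠ ⊥) :
    ∑ i ∈ s, f i ≠ ⊥ := by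
  classical
  induction s using Finset.induction_on with
  | empty => simp
  | @insert a s ha ih =>
      rw [Finset.sum_insert ha]
      intro hc
      rcases EReal.add_eq_bot_iff.1 hc with hc | hc
      · exact h a (Finset.mem_insert_self a s) hc
      · exact (ih fun i hi => h i (Finset.mem_insert_of_mem hi)) hc

lemma ereal_sum_real {s : Finset ℕ} {f : ℕ → EReal} (h : ∀ i ∈ s, ∃ r : ℝ, f i = (r : EReal)) :
    ∃ r : ℝ, ∑ i ∈ s, f i = (r : EReal) := by
  classical
  induction s using Finset.induction_on with
  | empty => exact ⟨0, by simp⟩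
  | @insert a s ha ih =>
      obtain ⟨r₁, hr₁⟩ := h a (Finset.mem_insert_self a s)
      obtain ⟨r₂, hr₂⟩ := ih fun i hi => h i (Finset.mem_insert_of_mem hi)
      exact ⟨r₁ + r₂, by rw [Finset.sum_insert ha, hr₁, hr₂]; norm_cast⟩

lemma ereal_sum_eq_top {s : Finset ℕ} {f : ℕ → EReal} (hb : ∀ i ∈ s, f i ≠ ⊥)
    {i : ℕ} (hi : i ∈ s) (htop : f i = ⊤) : ∑ j ∈ s, f j = ⊤ := by
  classical
  rw [← Finset.add_sum_erase s f hi, htop]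
  exact EReal.top_add_of_ne_bot (ereal_sum_ne_bot fun j hj => hb j (Finset.mem_of_mem_erase hj))

lemma ereal_add_coe_eq_top {x : EReal} {c : ℝ} (h : x + (c:EReal) = ⊤) : x = ⊤ := by
  induction x using EReal.rec with
  | bot => rw [EReal.bot_add] at h; exact absurd h (by simp)
  | coe y =>
      rw [show ((y:EReal) + (c:EReal)) = ((y + c : ℝ) : EReal) by norm_cast] at h
      exact absurd h (EReal.coe_ne_top _)
  | top => rfl

/-- `enatToE` applied to a supremum is bounded by any common bound of the terms. -/
lemma enatToE_iSup_le {ι : Sort*} [Nonempty ι] {a : ι → ENat} {B : EReal}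
    (h : ∀ i, enatToE (a i) ≤ B) : enatToE (⨆ i, a i) ≤ B := by
  rcases eq_or_ne (⨆ i, a i) ⊤ with hs | hs
  · rw [hs, enatToE_top]
    rw [nat_le_top_eereal (a := B) ?_]
    intro n
    have hlt : ((n : ℕ) : ENat) < ⨆ i, a i := by rw [hs]; exact WithTop.coe_lt_top n
    obtain ⟨i, hi⟩ := lt_iSup_iff.1 hlt
    calc ((n:ℕ) : EReal) = enatToE ((n:ℕ) : ENat) := (enatToE_natCast n).symm
      _ ≤ enatToE (a i) := enatToE_mono hi.le
      _ ≤ B := h i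
  · set m := (⨆ i, a i).toNat with hm
    have hcoe : ((m : ℕ) : ENat) = ⨆ i, a i := ENat.coe_toNat hs
    rcases Nat.eq_zero_or_pos m with h0 | hpos
    · rw [enatToE_of_ne_top hs, ← hm, h0]
      have : (0:EReal) ≤ B := le_trans (enatToE_nonneg _) (h (Classical.arbitrary ι))
      simpa using this
    · have hlt : (((m - 1 : ℕ)) : ENat) < ⨆ i, a i := by
        rw [← hcoe]
        exact_mod_cast Nat.sub_lt hpos one_pos
      obtain ⟨i, hi⟩ := lt_iSup_iff.1 hlt
      have h1 : ((m - 1 : ℕ) : ENat) + 1 ≤ a i := (ENat.add_one_le_iff (by simp)).2 hi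
      have h2 : ((m : ℕ) : ENat) ≤ a i := by
        rw [show ((m:ℕ):ENat) = ((m-1:ℕ):ENat) + 1 by exact_mod_cast (by omega : m = (m-1) + 1)]
        exact h1
      have h3 : (⨆ i, a i) = a i := le_antisymm (hcoe ▸ h2) (le_iSup a i)
      rw [h3]; exact h i


/-! ### Plays machinery -/

variable {R : Type}

noncomputable def nextOf (H : Game V R) (σ : H.MinStrat) (u : V) : V :=
  if H.isMin u then σ.1 u else Classical.choose (H.nosink u)

lemma nextOf_min (H : Game V R) (σ : H.MinStrat) {u : V} (h : H.isMin u) :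
    nextOf H σ u = σ.1 u := if_pos h

lemma edge_nextOf (H : Game V R) (σ : H.MinStrat) (u : V) : H.E u (nextOf H σ u) := by
  unfold nextOf; split
  · exact σ.2 u ‹_›
  · exact Classical.choose_spec (H.nosink u)

noncomputable def defPlay (H : Game V R) (σ : H.MinStrat) (v : V) : H.PlaysMin σ v :=
  ⟨fun k => (nextOf H σ)^[k] v, rfl,
    fun i => by
      show H.E ((nextOf H σ)^[i] v) ((nextOf H σ)^[i+1] v)
      rw [Function.iterate_succ_apply']; exact edge_nextOf H σ _,
    fun i hmin => by
      show (nextOf H σ)^[i+1] v = _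
      rw [Function.iterate_succ_apply']
      exact nextOf_min H σ hmin⟩

instance playsNonempty (H : Game V R) (σ : H.MinStrat) (v : V) : Nonempty (H.PlaysMin σ v) :=
  ⟨defPlay H σ v⟩

noncomputable def prependPlay (H : Game V R) (σ : H.MinStrat) {u u' : V} (hE : H.E u u')
    (hcons : H.isMin u → u' = σ.1 u) (ρ : H.PlaysMin σ u') : H.PlaysMin σ u :=
  ⟨fun n => match n with | 0 => u | (k+1) => ρ.1 k, rfl,
    fun i => by
      match i with
      | 0 => show H.E u (ρ.1 0); rw [ρ.2.1]; exact hE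
      | (k+1) => exact ρ.2.2.1 k,
    fun i h => by
      match i with
      | 0 => show ρ.1 0 = _; rw [ρ.2.1]; exact hcons h
      | (k+1) => exact ρ.2.2.2 k h⟩

lemma prependPlay_fst (H : Game V R) (σ : H.MinStrat) {u u' : V} (hE : H.E u u')
    (hcons : H.isMin u → u' = σ.1 u) (ρ : H.PlaysMin σ u') :
    (prependPlay H σ hE hcons ρ).1 0 = u ∧ ∀ k, (prependPlay H σ hE hcons ρ).1 (k+1) = ρ.1 k :=
  ⟨rfl, fun _ => rfl⟩

lemma concat_exists (H : Game V R) {σ : H.MinStrat} {v : V} (π : H.PlaysMin σ v) (k : ℕ)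
    (ρ : H.PlaysMin σ (π.1 k)) :
    ∃ χ : H.PlaysMin σ v, (∀ i ≤ k, χ.1 i = π.1 i) ∧ (∀ m, χ.1 (k + m) = ρ.1 m) := by
  set c : ℕ → V := fun i => if i < k then π.1 i else ρ.1 (i - k) with hc
  have hag : ∀ i ≤ k, c i = π.1 i := by
    intro i hi
    rcases lt_or_eq_of_le hi with h | h
    · simp [hc, h]
    · subst h
      simp only [hc, lt_irrefl, if_neg (lt_irrefl i), Nat.sub_self]
      exact ρ.2.1
  have hsh : ∀ m, c (k + m) = ρ.1 m := by
    intro m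
    simp only [hc]
    rw [if_neg (by omega), Nat.add_sub_cancel_left]
  have hpath : H.IsPath c := by
    intro i
    rcases lt_or_ge i k with h | h
    · rw [hag i h.le, hag (i+1) (by omega)]
      exact π.2.2.1 i
    · obtain ⟨m, rfl⟩ := Nat.exists_eq_add_of_le h
      rw [hsh m, show k + m + 1 = k + (m + 1) by omega, hsh (m+1)]
      exact ρ.2.2.1 m
  have hcons : H.ConsMin σ c := by
    intro i hmin
    rcases lt_or_ge i k with h | h
    · rw [hag i h.le] at hmin ⊢
      rw [hag (i+1) (by omega)]
      exact π.2.2.2 i hmin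
    · obtain ⟨m, rfl⟩ := Nat.exists_eq_add_of_le h
      rw [hsh m] at hmin ⊢
      rw [show k + m + 1 = k + (m + 1) by omega, hsh (m+1)]
      exact ρ.2.2.2 m hmin
  have h0 : c 0 = v := by
    rw [hag 0 (Nat.zero_le k)]
    exact π.2.1
  exact ⟨⟨c, h0, hpath, hcons⟩, hag, hsh⟩

/-! ### En basics -/

lemma partial_le_En (w : ℕ → EReal) (k : ℕ) : ∑ i ∈ range k, w i ≤ En w := by
  unfold En; exact le_iSup (fun k => ∑ i ∈ range k, w i) k

lemma En_nonneg (w : ℕ → EReal) : 0 ≤ En w := by simpa using partial_le_En w 0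

lemma EnVal_nonneg (H : Game V (WithTop ℤ)) (v : V) : 0 ≤ EnVal H v :=
  le_iInf fun σ => le_iSup_of_le (defPlay H σ v) (En_nonneg _)

/-- The partial sums of the concatenated play decompose. -/
lemma concat_sum (H : Game V (WithTop ℤ)) {σ : H.MinStrat} {v : V} (π : H.PlaysMin σ v) (k : ℕ)
    (ρ : H.PlaysMin σ (π.1 k)) {χ : H.PlaysMin σ v}
    (hag : ∀ i ≤ k, χ.1 i = π.1 i) (hsh : ∀ m, χ.1 (k + m) = ρ.1 m) (m : ℕ) :
    ∑ i ∈ range (k + m), toE (H.wt (χ.1 i) (χ.1 (i+1)))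
      = (∑ i ∈ range k, toE (H.wt (π.1 i) (π.1 (i+1))))
        + ∑ i ∈ range m, toE (H.wt (ρ.1 i) (ρ.1 (i+1))) := by
  induction m with
  | zero =>
      simp only [Nat.add_zero, range_zero, sum_empty, add_zero]
      apply Finset.sum_congr rfl
      intro i hi
      rw [hag i (by simp at hi; omega), hag (i+1) (by simp at hi; omega)]
  | succ m ih =>
      rw [show k + (m + 1) = (k + m) + 1 by omega, Finset.sum_range_succ, ih,
        Finset.sum_range_succ, hsh m, show k + m + 1 = k + (m + 1) by omega, hsh (m+1),
        add_assoc]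

lemma concat_partial_le (H : Game V (WithTop ℤ)) (σ : H.MinStrat) {v : V} (π : H.PlaysMin σ v)
    (k : ℕ) (ρ : H.PlaysMin σ (π.1 k)) (m : ℕ) :
    (∑ i ∈ range k, toE (H.wt (π.1 i) (π.1 (i+1))))
      + (∑ i ∈ range m, toE (H.wt (ρ.1 i) (ρ.1 (i+1))))
      ≤ ⨆ π' : H.PlaysMin σ v, En (fun i => toE (H.wseq π'.1 i)) := by
  obtain ⟨χ, hag, hsh⟩ := concat_exists H π k ρ
  rw [← concat_sum H π k ρ hag hsh m]
  exact le_iSup_of_le χ (partial_le_En _ (k + m))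



/-! ### EnP facts -/

lemma enat_iInf_eq_zero {ι : Sort*} {f : ι → ENat} (h : (⨅ i, f i) = 0) : ∃ i, f i = 0 := by
  by_contra hc
  push_neg at hc
  have h1 : (1:ENat) ≤ ⨅ i, f i := le_iInf fun i => ENat.one_le_iff_ne_zero.2 (hc i)
  rw [h] at h1
  exact absurd h1 (by simp)

lemma enatToE_add_le (a b : ENat) : enatToE (a + b) ≤ enatToE a + enatToE b := by
  rcases eq_or_ne a ⊤ with ha | ha
  · rw [ha, enatToE_top, EReal.top_add_of_ne_bot (enatToE_ne_bot b)]
    exact le_top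
  rcases eq_or_ne b ⊤ with hb | hb
  · rw [hb, enatToE_top, EReal.add_top_of_ne_bot (enatToE_ne_bot a)]
    exact le_top
  · rw [enatToE_add ha hb]

lemma enatToE_wToN_le {x : WithTop ℤ} (hx : 0 ≤ x) : enatToE (wToN x) ≤ toE x := by
  rcases eq_or_ne x ⊤ with h | h
  · rw [h, wToN_top, enatToE_top, toE_top]
  · obtain ⟨n, rfl⟩ := WithTop.ne_top_iff_exists.1 h
    rw [wToN_coe, enatToE_natCast, toE_coe]
    have hn : 0 ≤ n := by exact_mod_cast hx
    have h2 : ((n.toNat : ℤ)) = n := Int.toNat_of_nonneg hn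
    exact_mod_cast h2.le

lemma enatToE_sum_wToN_le (w : ℕ → WithTop ℤ) (k : ℕ) (h : ∀ i < k, 0 ≤ w i) :
    enatToE (∑ i ∈ range k, wToN (w i)) ≤ ∑ i ∈ range k, toE (w i) := by
  induction k with
  | zero => simp [enatToE_zero]
  | succ k ih =>
      rw [Finset.sum_range_succ, Finset.sum_range_succ]
      calc enatToE (∑ i ∈ range k, wToN (w i) + wToN (w k))
          ≤ enatToE (∑ i ∈ range k, wToN (w i)) + enatToE (wToN (w k)) := enatToE_add_le _ _
        _ ≤ _ := add_le_add (ih (fun i hi => h i (by omega))) (enatToE_wToN_le (h k (by omega)))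

/-- Play-level soundness: the positive-energy valuation bounds the energy valuation. -/
lemma EnP_le_En (w : ℕ → WithTop ℤ) : enatToE (EnP w) ≤ En (fun i => toE (w i)) := by
  unfold EnP
  split
  case isTrue h =>
    exact le_trans (enatToE_sum_wToN_le w _ (fun i hi => not_lt.1 (Nat.find_min h hi)))
      (partial_le_En _ _)
  case isFalse h =>
    push_neg at h
    apply enatToE_iSup_le
    intro k
    exact le_trans (enatToE_sum_wToN_le w k (fun i _ => h i)) (partial_le_En _ _)

lemma EnPVal_le_EnVal (H : Game V (WithTop ℤ)) (v : V) :
    enatToE (EnPVal H v) ≤ EnVal H v := by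
  unfold EnVal
  apply le_iInf
  intro σ
  have h1 : EnPVal H v ≤ ⨆ π : H.PlaysMin σ v, EnP (H.wseq π.1) := by
    unfold EnPVal; exact iInf_le _ σ
  apply le_trans (enatToE_mono h1)
  apply enatToE_iSup_le
  intro π
  exact le_trans (EnP_le_En _)
    (le_iSup (fun π' : H.PlaysMin σ v => En (fun i => toE (H.wseq π'.1 i))) π)

lemma EnP_zero_step {w : ℕ → WithTop ℤ} (h0 : EnP w = 0) (hpos : ¬ w 0 < 0) :
    w 0 = 0 ∧ EnP (fun i => w (i+1)) = 0 := by
  unfold EnP at h0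
  by_cases h : ∃ k, w k < 0
  · rw [dif_pos h] at h0
    have hK := Nat.find_spec h
    set K := Nat.find h with hKdef
    have hK0 : K ≠ 0 := by intro hz; rw [hz] at hK; exact hpos hK
    have hall : ∀ i ∈ range K, wToN (w i) = 0 := Finset.sum_eq_zero_iff.mp h0
    have hw0 : w 0 = 0 :=
      (wToN_eq_zero_iff (not_lt.1 hpos)).1 (hall 0 (mem_range.2 (Nat.pos_of_ne_zero hK0)))
    refine ⟨hw0, ?_⟩
    have h' : ∃ k, w (k+1) < 0 := ⟨K - 1, by rw [show K - 1 + 1 = K by omega]; exact hK⟩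
    unfold EnP
    rw [dif_pos h']
    apply Finset.sum_eq_zero
    intro i hi
    have hi' : i < Nat.find h' := mem_range.1 hi
    have hle : Nat.find h' ≤ K - 1 := Nat.find_le (by rw [show K - 1 + 1 = K by omega]; exact hK)
    exact hall (i+1) (mem_range.2 (by omega))
  · rw [dif_neg h] at h0
    have hterm : ∀ i, wToN (w i) = 0 := by
      intro i
      have h1 : ∑ j ∈ range (i+1), wToN (w j) ≤ 0 := by
        rw [← h0]; exact le_iSup (fun k => ∑ j ∈ range k, wToN (w j)) (i+1)
      exact Finset.sum_eq_zero_iff.mp (le_antisymm h1 zero_le) i (mem_range.2 (by omega))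
    push_neg at h
    refine ⟨(wToN_eq_zero_iff (h 0)).1 (hterm 0), ?_⟩
    unfold EnP
    rw [dif_neg (by push_neg; exact fun k => h (k+1))]
    apply le_antisymm _ zero_le
    apply iSup_le
    intro k
    exact le_of_eq (Finset.sum_eq_zero (fun i _ => hterm (i+1)))

lemma exists_EnP_strat (H : Game V (WithTop ℤ)) (u : V) (h0 : EnPVal H u = 0) :
    ∃ σ : H.MinStrat, ∀ π : H.PlaysMin σ u, EnP (H.wseq π.1) = 0 := by
  unfold EnPVal at h0
  obtain ⟨σ, hσ⟩ := enat_iInf_eq_zero h0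
  exact ⟨σ, fun π => le_antisymm
    (hσ ▸ le_iSup (fun π' : H.PlaysMin σ u => EnP (H.wseq π'.1)) π) zero_le⟩

lemma step_edge (H : Game V (WithTop ℤ)) {σ : H.MinStrat} {u u' : V} (hE : H.E u u')
    (hcons : H.isMin u → u' = σ.1 u)
    (hall : ∀ π : H.PlaysMin σ u, EnP (H.wseq π.1) = 0) :
    H.wt u u' < 0 ∨ (H.wt u u' = 0 ∧ EnPVal H u' = 0) := by
  by_cases hneg : H.wt u u' < 0
  · exact Or.inl hneg
  right
  have key : ∀ ρ : H.PlaysMin σ u', H.wt u u' = 0 ∧ EnP (H.wseq ρ.1) = 0 := by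
    intro ρ
    have h0 := hall (prependPlay H σ hE hcons ρ)
    have hw0 : H.wseq (prependPlay H σ hE hcons ρ).1 0 = H.wt u u' := by
      show H.wt u (ρ.1 0) = H.wt u u'
      rw [ρ.2.1]
    have hshift : (fun i => H.wseq (prependPlay H σ hE hcons ρ).1 (i+1)) = H.wseq ρ.1 := rfl
    have h2 := EnP_zero_step (w := H.wseq (prependPlay H σ hE hcons ρ).1) h0
      (by rw [hw0]; exact hneg)
    rw [hw0] at h2
    rw [hshift] at h2
    exact h2
  obtain ⟨ρ₀⟩ : Nonempty (H.PlaysMin σ u') := inferInstance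
  refine ⟨(key ρ₀).1, ?_⟩
  apply le_antisymm _ zero_le
  calc EnPVal H u' ≤ ⨆ ρ : H.PlaysMin σ u', EnP (H.wseq ρ.1) := by
        unfold EnPVal; exact iInf_le _ σ
    _ ≤ 0 := iSup_le fun ρ => le_of_eq (key ρ).2

lemma minStep (H : Game V (WithTop ℤ)) {u : V} (hMin : H.isMin u) (h0 : EnPVal H u = 0) :
    ∃ u', H.E u u' ∧ (H.wt u u' < 0 ∨ (H.wt u u' = 0 ∧ EnPVal H u' = 0)) := by
  obtain ⟨σ, hσ⟩ := exists_EnP_strat H u h0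
  exact ⟨σ.1 u, σ.2 u hMin, step_edge H (σ.2 u hMin) (fun _ => rfl) hσ⟩

lemma maxStep (H : Game V (WithTop ℤ)) {u : V} (hMax : ¬ H.isMin u) (h0 : EnPVal H u = 0)
    {u' : V} (hE : H.E u u') :
    H.wt u u' < 0 ∨ (H.wt u u' = 0 ∧ EnPVal H u' = 0) := by
  obtain ⟨σ, hσ⟩ := exists_EnP_strat H u h0
  exact step_edge H hE (fun h => absurd h hMax) hσ



/-! ### The trap lemma: a nonpositive trap has energy value 0 -/

lemma trap_lemma (H : Game V (WithTop ℤ)) (C : Set V)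
    (hMin : ∀ u ∈ C, H.isMin u → ∃ u', H.E u u' ∧ H.wt u u' ≤ 0 ∧ u' ∈ C)
    (hMax : ∀ u ∈ C, ¬ H.isMin u → ∀ u', H.E u u' → H.wt u u' ≤ 0 ∧ u' ∈ C)
    {v : V} (hv : v ∈ C) : EnVal H v = 0 := by
  classical
  have hwit : ∀ u, H.isMin u → ∃ u', H.E u u' ∧ (u ∈ C → H.wt u u' ≤ 0 ∧ u' ∈ C) := by
    intro u hu
    by_cases hc : u ∈ C
    · obtain ⟨u', h1, h2, h3⟩ := hMin u hc hu
      exact ⟨u', h1, fun _ => ⟨h2, h3⟩⟩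
    · exact ⟨(H.nosink u).choose, (H.nosink u).choose_spec, fun h => absurd h hc⟩
  set f : V → V := fun u => if hu : H.isMin u then (hwit u hu).choose else (H.nosink u).choose
    with hf
  have hstrat : ∀ u, H.isMin u → H.E u (f u) := by
    intro u hu; simp only [hf, dif_pos hu]; exact (hwit u hu).choose_spec.1
  set σ : H.MinStrat := ⟨f, hstrat⟩ with hσ
  apply le_antisymm _ (EnVal_nonneg H v)
  unfold EnVal
  apply le_trans (iInf_le _ σ)
  apply iSup_le
  intro π
  have hC : ∀ k, π.1 k ∈ C := by
    intro k
    induction k with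
    | zero => rw [π.2.1]; exact hv
    | succ k ih =>
        by_cases hm : H.isMin (π.1 k)
        · rw [π.2.2.2 k hm]
          show f (π.1 k) ∈ C
          simp only [hf]; rw [dif_pos hm]
          exact ((hwit _ hm).choose_spec.2 ih).2
        · exact (hMax _ ih hm _ (π.2.2.1 k)).2
  have hw : ∀ k, H.wt (π.1 k) (π.1 (k+1)) ≤ 0 := by
    intro k
    by_cases hm : H.isMin (π.1 k)
    · rw [π.2.2.2 k hm]
      show H.wt _ (f (π.1 k)) ≤ 0
      simp only [hf]; rw [dif_pos hm]
      exact ((hwit _ hm).choose_spec.2 (hC k)).1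
    · exact (hMax _ (hC k) hm _ (π.2.2.1 k)).1
  unfold En
  apply iSup_le
  intro k
  apply Finset.sum_nonpos
  intro i _
  exact toE_nonpos (hw i)



/-! ### The potential transformation lemma -/

lemma toE_real {x : WithTop ℤ} (hx : x ≠ ⊤) : ∃ r : ℝ, toE x = (r : EReal) := by
  obtain ⟨n, rfl⟩ := WithTop.ne_top_iff_exists.1 hx
  exact ⟨n, toE_coe n⟩

lemma modWt_top_of (w : V → V → WithTop ℤ) (φ : V → ENat) {u u' : V}
    (h : w u u' = ⊤ ∨ φ u = ⊤ ∨ φ u' = ⊤) : modWt w φ u u' = ⊤ := by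
  unfold modWt; rw [if_pos h]

lemma modWt_ne_top (w : V → V → WithTop ℤ) (φ : V → ENat) {u u' : V}
    (h : modWt w φ u u' ≠ ⊤) : w u u' ≠ ⊤ ∧ φ u ≠ ⊤ ∧ φ u' ≠ ⊤ := by
  by_contra hc
  push_neg at hc
  apply h
  apply modWt_top_of
  by_cases h1 : w u u' = ⊤
  · exact Or.inl h1
  by_cases h2 : φ u = ⊤
  · exact Or.inr (Or.inl h2)
  · exact Or.inr (Or.inr (hc h1 h2))

lemma modWt_toE (H : Game V (WithTop ℤ)) (φ : V → ENat) {u u' : V}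
    (hw : H.wt u u' ≠ ⊤) (hp : φ u ≠ ⊤) (hq : φ u' ≠ ⊤) :
    toE (modWt H.wt φ u u') + enatToE (φ u) = toE (H.wt u u') + enatToE (φ u') := by
  obtain ⟨a, ha⟩ := WithTop.ne_top_iff_exists.1 hw
  unfold modWt
  rw [if_neg (by push_neg; exact ⟨hw, hp, hq⟩), ← ha]
  rw [enatToE_of_ne_top hp, enatToE_of_ne_top hq, toE_coe, toE_coe, WithTop.untopD_coe]
  norm_cast
  push_cast
  ring

lemma telescope (H : Game V (WithTop ℤ)) (φ : V → ENat) (π : ℕ → V) (k : ℕ)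
    (hw : ∀ i < k, H.wt (π i) (π (i+1)) ≠ ⊤) (hφ : ∀ i ≤ k, φ (π i) ≠ ⊤) :
    (∑ i ∈ range k, toE (modWt H.wt φ (π i) (π (i+1)))) + enatToE (φ (π 0))
      = (∑ i ∈ range k, toE (H.wt (π i) (π (i+1)))) + enatToE (φ (π k)) := by
  induction k with
  | zero => simp
  | succ k ih =>
      have ih' := ih (fun i hi => hw i (by omega)) (fun i hi => hφ i (by omega))
      rw [Finset.sum_range_succ, Finset.sum_range_succ]
      calc (∑ i ∈ range k, toE (modWt H.wt φ (π i) (π (i+1))))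
            + toE (modWt H.wt φ (π k) (π (k+1))) + enatToE (φ (π 0))
          = ((∑ i ∈ range k, toE (modWt H.wt φ (π i) (π (i+1)))) + enatToE (φ (π 0)))
            + toE (modWt H.wt φ (π k) (π (k+1))) := by
              rw [add_right_comm]
        _ = ((∑ i ∈ range k, toE (H.wt (π i) (π (i+1)))) + enatToE (φ (π k)))
            + toE (modWt H.wt φ (π k) (π (k+1))) := by rw [ih']
        _ = (∑ i ∈ range k, toE (H.wt (π i) (π (i+1))))
            + (toE (modWt H.wt φ (π k) (π (k+1))) + enatToE (φ (π k))) := by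
              rw [add_assoc, add_comm (enatToE (φ (π k)))]
        _ = (∑ i ∈ range k, toE (H.wt (π i) (π (i+1))))
            + (toE (H.wt (π k) (π (k+1))) + enatToE (φ (π (k+1)))) := by
              rw [modWt_toE H φ (hw k (by omega)) (hφ k (by omega)) (hφ (k+1) (le_refl _))]
        _ = _ := by rw [← add_assoc]

lemma step_lemma_a (H : Game V (WithTop ℤ)) (φ : V → ENat) {v : V} (hv : φ v = ⊤) :
    EnVal (modify H φ) v = ⊤ := by
  apply top_le_iff.1
  have key : (⊤:EReal) ≤ ⨅ σ : H.MinStrat, ⨆ π : H.PlaysMin σ v,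
      ⨆ k, ∑ i ∈ range k, toE (modWt H.wt φ (π.1 i) (π.1 (i+1))) := by
    apply le_iInf; intro σ
    refine le_trans ?_ (le_iSup _ (defPlay H σ v))
    refine le_trans ?_ (le_iSup _ 1)
    rw [Finset.sum_range_one]
    have h1 : modWt H.wt φ ((defPlay H σ v).1 0) ((defPlay H σ v).1 1) = ⊤ :=
      modWt_top_of _ _ (Or.inr (Or.inl hv))
    rw [h1, toE_top]
  exact key

lemma step_lemma_b (H : Game V (WithTop ℤ)) (φ : V → ENat)
    (hφle : ∀ u, enatToE (φ u) ≤ EnVal H u) {v : V} (hv : φ v ≠ ⊤) :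
    EnVal (modify H φ) v + enatToE (φ v) = EnVal H v := by
  set c : ℝ := ((φ v).toNat : ℝ) with hcdef
  have hce : enatToE (φ v) = (c : EReal) := enatToE_of_ne_top hv
  rw [hce]
  have hEnM : EnVal (modify H φ) v
      = ⨅ σ : H.MinStrat, ⨆ π : H.PlaysMin σ v,
          ⨆ k, ∑ i ∈ range k, toE (modWt H.wt φ (π.1 i) (π.1 (i+1))) := rfl
  have hEnH : EnVal H v
      = ⨅ σ : H.MinStrat, ⨆ π : H.PlaysMin σ v,
          ⨆ k, ∑ i ∈ range k, toE (H.wt (π.1 i) (π.1 (i+1))) := rfl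
  rw [hEnM, hEnH, ereal_iInf_add_coe]
  apply iInf_congr
  intro σ
  rw [ereal_iSup_add_coe]
  have hEnH_le : ∀ u, EnVal H u ≤ ⨆ ρ : H.PlaysMin σ u,
      ⨆ m, ∑ i ∈ range m, toE (H.wt (ρ.1 i) (ρ.1 (i+1))) := fun u =>
    iInf_le (fun σ' : H.MinStrat => ⨆ ρ : H.PlaysMin σ' u,
      ⨆ m, ∑ i ∈ range m, toE (H.wt (ρ.1 i) (ρ.1 (i+1)))) σ
  apply le_antisymm
  · -- each (⨆ k, T π k) + c is at most Fσ
    apply iSup_le; intro π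
    rw [ereal_iSup_add_coe]
    apply iSup_le; intro k
    by_cases hbad : ∃ i, H.wt (π.1 i) (π.1 (i+1)) = ⊤ ∨ φ (π.1 (i+1)) = ⊤
    · -- in this case Fσ = ⊤
      apply le_trans le_top
      apply top_le_iff.2
      set j := Nat.find hbad with hjdef
      have hjspec := Nat.find_spec hbad
      have hjmin : ∀ i < j, H.wt (π.1 i) (π.1 (i+1)) ≠ ⊤ ∧ φ (π.1 (i+1)) ≠ ⊤ := by
        intro i hi
        have h2 := Nat.find_min hbad hi
        push_neg at h2; exact h2
      by_cases hwt : H.wt (π.1 j) (π.1 (j+1)) = ⊤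
      · apply top_le_iff.1
        refine le_trans ?_ (le_iSup (fun π' : H.PlaysMin σ v =>
          ⨆ m, ∑ i ∈ range m, toE (H.wt (π'.1 i) (π'.1 (i+1)))) π)
        refine le_trans ?_ (le_iSup (fun m =>
          ∑ i ∈ range m, toE (H.wt (π.1 i) (π.1 (i+1)))) (j+1))
        rw [ereal_sum_eq_top (f := fun i => toE (H.wt (π.1 i) (π.1 (i+1))))
          (fun _ _ => toE_ne_bot _) (mem_range.2 (by omega : j < j + 1))
          (by show toE (H.wt (π.1 j) (π.1 (j+1))) = ⊤; rw [hwt, toE_top])]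
      · have hφt : φ (π.1 (j+1)) = ⊤ := by
          rcases hjspec with h | h
          · exact absurd h hwt
          · exact h
        obtain ⟨s, hs⟩ : ∃ r : ℝ,
            (∑ i ∈ range (j+1), toE (H.wt (π.1 i) (π.1 (i+1)))) = (r:EReal) := by
          apply ereal_sum_real
          intro i hi
          have hi' : i < j + 1 := mem_range.1 hi
          apply toE_real
          rcases lt_or_eq_of_le (by omega : i ≤ j) with h | h
          · exact (hjmin i h).1
          · subst h; exact hwt
        have h1 : EnVal H (π.1 (j+1)) = ⊤ := by
          apply top_le_iff.1
          refine le_trans ?_ (hφle (π.1 (j+1)))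
          rw [hφt, enatToE_top]
        have h2 : (⨆ ρ : H.PlaysMin σ (π.1 (j+1)),
            ⨆ m, ∑ i ∈ range m, toE (H.wt (ρ.1 i) (ρ.1 (i+1)))) = ⊤ :=
          top_le_iff.1 (h1 ▸ hEnH_le (π.1 (j+1)))
        have h3 : ((⨆ ρ : H.PlaysMin σ (π.1 (j+1)),
            ⨆ m, ∑ i ∈ range m, toE (H.wt (ρ.1 i) (ρ.1 (i+1)))) + (s:EReal))
            ≤ ⨆ π' : H.PlaysMin σ v,
                ⨆ m, ∑ i ∈ range m, toE (H.wt (π'.1 i) (π'.1 (i+1))) := by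
          rw [ereal_iSup_add_coe]
          apply iSup_le; intro ρ
          rw [ereal_iSup_add_coe]
          apply iSup_le; intro m
          have h4 := concat_partial_le H σ π (j+1) ρ m
          rw [hs] at h4
          rw [add_comm]
          exact h4
        rw [h2, EReal.top_add_coe] at h3
        exact top_le_iff.1 h3
    · push_neg at hbad
      have hφall : ∀ i ≤ k, φ (π.1 i) ≠ ⊤ := by
        intro i _
        cases i with
        | zero => rw [π.2.1]; exact hv
        | succ m => exact (hbad m).2
      have htel := telescope H φ π.1 k (fun i _ => (hbad i).1) hφall
      rw [π.2.1, hce] at htel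
      rw [htel]
      obtain ⟨s, hs⟩ : ∃ r : ℝ,
          (∑ i ∈ range k, toE (H.wt (π.1 i) (π.1 (i+1)))) = (r:EReal) :=
        ereal_sum_real fun i _ => toE_real (hbad i).1
      rw [hs]
      have hb : enatToE (φ (π.1 k)) ≤ ⨆ ρ : H.PlaysMin σ (π.1 k),
          ⨆ m, ∑ i ∈ range m, toE (H.wt (ρ.1 i) (ρ.1 (i+1))) :=
        le_trans (hφle _) (hEnH_le _)
      apply le_trans (add_le_add_right hb _)
      rw [add_comm, ereal_iSup_add_coe]
      apply iSup_le; intro ρ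
      rw [ereal_iSup_add_coe]
      apply iSup_le; intro m
      have h4 := concat_partial_le H σ π k ρ m
      rw [hs] at h4
      rw [add_comm]
      exact h4
  · -- Fσ is at most the modified value plus c
    apply iSup_le; intro π
    apply iSup_le; intro k
    have key : (∑ i ∈ range k, toE (H.wt (π.1 i) (π.1 (i+1))))
        ≤ (∑ i ∈ range k, toE (modWt H.wt φ (π.1 i) (π.1 (i+1)))) + (c:EReal) := by
      by_cases hbad : ∃ i < k, H.wt (π.1 i) (π.1 (i+1)) = ⊤ ∨ φ (π.1 (i+1)) = ⊤
      · obtain ⟨i, hik, hi⟩ := hbad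
        have htop : toE (modWt H.wt φ (π.1 i) (π.1 (i+1))) = ⊤ := by
          rw [modWt_top_of _ _ ?_, toE_top]
          rcases hi with h | h
          · exact Or.inl h
          · exact Or.inr (Or.inr h)
        rw [ereal_sum_eq_top (f := fun i => toE (modWt H.wt φ (π.1 i) (π.1 (i+1))))
          (fun _ _ => toE_ne_bot _) (mem_range.2 hik) htop, EReal.top_add_coe]
        exact le_top
      · push_neg at hbad
        have hφall : ∀ i ≤ k, φ (π.1 i) ≠ ⊤ := by
          intro i hi
          cases i with
          | zero => rw [π.2.1]; exact hv
          | succ m => exact (hbad m (by omega)).2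
        have htel := telescope H φ π.1 k (fun i hi => (hbad i hi).1) hφall
        rw [π.2.1, hce] at htel
        rw [htel]
        exact le_add_of_nonneg_right (enatToE_nonneg _)
    have h5 : (∑ i ∈ range k, toE (modWt H.wt φ (π.1 i) (π.1 (i+1)))) + ((c:ℝ):EReal)
        ≤ (⨆ m, ∑ i ∈ range m, toE (modWt H.wt φ (π.1 i) (π.1 (i+1)))) + ((c:ℝ):EReal) :=
      add_le_add_left (le_iSup (fun m =>
        ∑ i ∈ range m, toE (modWt H.wt φ (π.1 i) (π.1 (i+1)))) k) _
    exact le_trans key (le_trans h5 (le_iSup (fun π' : H.PlaysMin σ v =>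
        (⨆ m, ∑ i ∈ range m, toE (modWt H.wt φ (π'.1 i) (π'.1 (i+1)))) + ((c:ℝ):EReal)) π))



/-! ### The ESL iteration -/

lemma esl_succ (L : Game V (WithTop ℤ)) (i : ℕ) :
    esl L (i+1) = modify (esl L i) (EnPVal (esl L i)) := rfl

lemma eslPhi_succ (L : Game V (WithTop ℤ)) (i : ℕ) (v : V) :
    eslPhi L (i+1) v = eslPhi L i v + EnPVal (esl L i) v := by
  unfold eslPhi; rw [Finset.sum_range_succ]

lemma eslPhi_zero (L : Game V (WithTop ℤ)) (v : V) : eslPhi L 0 v = 0 := by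
  unfold eslPhi; simp

lemma esl_inv (L : Game V (WithTop ℤ)) (hL : ∀ u u', L.wt u u' ≠ ⊤) (i : ℕ) :
    ∀ u u', (esl L i).wt u u' ≠ ⊤ → eslPhi L i u ≠ ⊤ ∧ eslPhi L i u' ≠ ⊤ := by
  induction i with
  | zero => intro u u' _; rw [eslPhi_zero, eslPhi_zero]; simp
  | succ i ih =>
      intro u u' hw
      rw [esl_succ] at hw
      obtain ⟨hw', hu, hu'⟩ := modWt_ne_top (esl L i).wt (EnPVal (esl L i)) hw
      obtain ⟨h3, h4⟩ := ih u u' hw'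
      rw [eslPhi_succ, eslPhi_succ]
      exact ⟨WithTop.add_ne_top.2 ⟨h3, hu⟩, WithTop.add_ne_top.2 ⟨h4, hu'⟩⟩

/-- Main induction: the accumulated potential is accounted for by the energy values. -/
lemma esl_main (G : Game V ℤ) (i : ℕ) (v : V) :
    (eslPhi (liftZ G) i v = ⊤ → EnVal (liftZ G) v = ⊤ ∧ EnVal (esl (liftZ G) i) v = ⊤) ∧
    (eslPhi (liftZ G) i v ≠ ⊤ →
      EnVal (esl (liftZ G) i) v + enatToE (eslPhi (liftZ G) i v) = EnVal (liftZ G) v) := by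
  induction i with
  | zero =>
      constructor
      · intro h; rw [eslPhi_zero] at h; exact absurd h (by simp)
      · intro _
        rw [eslPhi_zero, enatToE_zero, add_zero]
        rfl
  | succ i ih =>
      have hφle : ∀ u, enatToE (EnPVal (esl (liftZ G) i) u) ≤ EnVal (esl (liftZ G) i) u :=
        fun u => EnPVal_le_EnVal _ u
      constructor
      · intro h
        by_cases h1 : eslPhi (liftZ G) i v = ⊤
        · obtain ⟨hLv, hGv⟩ := ih.1 h1
          refine ⟨hLv, ?_⟩
          by_cases h2 : EnPVal (esl (liftZ G) i) v = ⊤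
          · rw [esl_succ]; exact step_lemma_a _ _ h2
          · have hb := step_lemma_b (esl (liftZ G) i) (EnPVal (esl (liftZ G) i)) hφle h2
            rw [hGv, enatToE_of_ne_top h2] at hb
            rw [esl_succ]
            exact ereal_add_coe_eq_top hb
        · have h2 : EnPVal (esl (liftZ G) i) v = ⊤ := by
            by_contra h2
            rw [eslPhi_succ] at h
            exact (WithTop.add_ne_top.2 ⟨h1, h2⟩) h
          have hL2 : EnVal (liftZ G) v = ⊤ := by
            have hGtop : EnVal (esl (liftZ G) i) v = ⊤ :=
              top_le_iff.1 (by rw [← enatToE_top, ← h2]; exact hφle v)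
            have hb := ih.2 h1
            rw [← hb, hGtop, enatToE_of_ne_top h1, EReal.top_add_coe]
          exact ⟨hL2, by rw [esl_succ]; exact step_lemma_a _ _ h2⟩
      · intro h
        rw [eslPhi_succ] at h ⊢
        have h1 : eslPhi (liftZ G) i v ≠ ⊤ := by
          intro hc; rw [hc, top_add] at h; exact h rfl
        have h2 : EnPVal (esl (liftZ G) i) v ≠ ⊤ := by
          intro hc; rw [hc, add_top] at h; exact h rfl
        have hb := step_lemma_b (esl (liftZ G) i) (EnPVal (esl (liftZ G) i)) hφle h2
        have hi2 := ih.2 h1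
        rw [esl_succ, enatToE_add h1 h2]
        calc EnVal (modify (esl (liftZ G) i) (EnPVal (esl (liftZ G) i))) v
              + (enatToE (eslPhi (liftZ G) i v) + enatToE (EnPVal (esl (liftZ G) i) v))
            = (EnVal (modify (esl (liftZ G) i) (EnPVal (esl (liftZ G) i))) v
              + enatToE (EnPVal (esl (liftZ G) i) v)) + enatToE (eslPhi (liftZ G) i v) := by
              rw [add_comm (enatToE (eslPhi (liftZ G) i v)), ← add_assoc]
          _ = EnVal (esl (liftZ G) i) v + enatToE (eslPhi (liftZ G) i v) := by rw [hb]
          _ = EnVal (liftZ G) v := hi2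


end Game

end ESLProof

/-- Full correctness of the ESL algorithm: at a fixed point `Φ_{j+1} = Φ_j`, a vertex has finite
energy in `G` iff its energy in `G_j` is `0`, and in that case `En_G(v) = Φ_j(v)`. -/
theorem esl_full_correctness {V : Type} [Fintype V] (G : Game V ℤ) (j : ℕ)
    (h : eslPhi (liftZ G) (j + 1) = eslPhi (liftZ G) j) :
    ∀ v : V,
      (EnVal (liftZ G) v < ⊤ ↔ EnVal (esl (liftZ G) j) v = 0) ∧
      (EnVal (liftZ G) v < ⊤ → EnVal (liftZ G) v = enatToE (eslPhi (liftZ G) j v)) := by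
  intro v
  have hfix : ∀ u, eslPhi (liftZ G) j u ≠ ⊤ → EnPVal (esl (liftZ G) j) u = 0 := by
    intro u hu
    have h1 : eslPhi (liftZ G) (j+1) u = eslPhi (liftZ G) j u := congrFun h u
    rw [eslPhi_succ] at h1
    have h2 : eslPhi (liftZ G) j u + EnPVal (esl (liftZ G) j) u
        = eslPhi (liftZ G) j u + 0 := by rw [add_zero]; exact h1
    exact WithTop.add_left_cancel hu h2
  have hC : ∀ u, eslPhi (liftZ G) j u ≠ ⊤ → EnVal (esl (liftZ G) j) u = 0 := by
    intro u hu
    apply trap_lemma (esl (liftZ G) j) {u' | eslPhi (liftZ G) j u' ≠ ⊤} ?_ ?_ hu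
    · intro w hw hwMin
      obtain ⟨w', hE, hcase⟩ := minStep (esl (liftZ G) j) hwMin (hfix w hw)
      refine ⟨w', hE, ?_, ?_⟩
      · rcases hcase with h' | h'
        · exact le_of_lt h'
        · exact le_of_eq h'.1
      · have hne : (esl (liftZ G) j).wt w w' ≠ ⊤ := by
          rcases hcase with h' | h'
          · intro hc; rw [hc] at h'; exact not_top_lt h'
          · rw [h'.1]; simp
        exact (esl_inv (liftZ G) (fun _ _ => WithTop.coe_ne_top) j w w' hne).2
    · intro w hw hwMax w' hE
      have hcase := maxStep (esl (liftZ G) j) hwMax (hfix w hw) hE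
      refine ⟨?_, ?_⟩
      · rcases hcase with h' | h'
        · exact le_of_lt h'
        · exact le_of_eq h'.1
      · have hne : (esl (liftZ G) j).wt w w' ≠ ⊤ := by
          rcases hcase with h' | h'
          · intro hc; rw [hc] at h'; exact not_top_lt h'
          · rw [h'.1]; simp
        exact (esl_inv (liftZ G) (fun _ _ => WithTop.coe_ne_top) j w w' hne).2
  by_cases hv : eslPhi (liftZ G) j v = ⊤
  · obtain ⟨hLtop, hjtop⟩ := (esl_main G j v).1 hv
    constructor
    · constructor
      · intro h'; rw [hLtop] at h'; exact absurd h' (lt_irrefl _)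
      · intro h'; rw [hjtop] at h'; exact absurd h' (by simp)
    · intro h'; rw [hLtop] at h'; exact absurd h' (lt_irrefl _)
  · have h0 : EnVal (esl (liftZ G) j) v = 0 := hC v hv
    have hb := (esl_main G j v).2 hv
    rw [h0, zero_add] at hb
    constructor
    · constructor
      · intro _; exact h0
      · intro _
        rw [← hb, enatToE_of_ne_top hv]
        exact EReal.coe_lt_top _
    · intro _; exact hb.symm
end
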